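/- Let (A,B) and (A′,B′) be as in the dual column simulation, let 0 ≤ ε < 1/(5n), and let (x*,y*) be an ε-WSNE of (A′,B′). Then for each row i < k of A, if P(cb₁ⁱ) > 0 and P(rb₁ⁱ) + P(rb₂ⁱ) > 0, then y*_{5i+1} + y*_{5i+2} − ε ≤ y*_{5i} ≤ y*_{5i+1} + y*_{5i+2} + ε. -/

import Mathlib

open Finset
open scoped Classical

/-- `(x, y)` is an `ε`-well-supported Nash equilibrium of the bimatrix game with
`nr` rows, `nc` columns and payoff matrices `A` (row player) and `B` (column player). -/
def IsWSNE (nr nc : ℕ) (A B : ℕ → ℕ → ℝ) (x y : ℕ → ℝ) (ε : ℝ) : Prop :=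
  (∀ i, 0 ≤ x i) ∧ (∀ i, nr ≤ i → x i = 0) ∧ (∑ i ∈ range nr, x i = 1) ∧
  (∀ j, 0 ≤ y j) ∧ (∀ j, nc ≤ j → y j = 0) ∧ (∑ j ∈ range nc, y j = 1) ∧
  (∀ i < nr, 0 < x i → ∀ i' < nr,
    ∑ j ∈ range nc, A i j * y j ≥ ∑ j ∈ range nc, A i' j * y j - ε) ∧
  (∀ j < nc, 0 < y j → ∀ j' < nc,
    ∑ i ∈ range nr, x i * B i j ≥ ∑ i ∈ range nr, x i * B i j' - ε)

/-- The column requirement of a stage 2 game: at most four non-zero entries, all in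
`{1,2}`, with at most one `2`. -/
def Stage2Col (nr : ℕ) (col : ℕ → ℝ) : Prop :=
  (∀ i < nr, col i ∈ ({0, 1, 2} : Set ℝ)) ∧
  ((range nr).filter fun i => col i ≠ 0).card ≤ 4 ∧
  ((range nr).filter fun i => col i = 2).card ≤ 1

/-- The row requirement of a stage 2 game: either (i) at most three entries `1`,
or (ii) a single `2` with at most one `1`, or (iii) exactly two entries `2` (all
remaining entries are `0`). -/
def Stage2Row (nc : ℕ) (row : ℕ → ℝ) : Prop :=
  ((∀ j < nc, row j = 0 ∨ row j = 1) ∧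
    ((range nc).filter fun j => row j = 1).card ≤ 3) ∨
  ((((range nc).filter fun j => row j = 2).card = 1) ∧
    ((range nc).filter fun j => row j = 1).card ≤ 1 ∧
    ∀ j < nc, row j ∈ ({0, 1, 2} : Set ℝ)) ∨
  ((((range nc).filter fun j => row j = 2).card = 2) ∧
    ∀ j < nc, row j ∈ ({0, 2} : Set ℝ))

/-- `(A, B)` (with `nr` rows and `nc` columns) is a stage 2 game. -/
def Stage2Game (nr nc : ℕ) (A B : ℕ → ℕ → ℝ) : Prop :=
  (∀ j < nc, Stage2Col nr (fun i => A i j)) ∧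
  (∀ i < nr, Stage2Row nc (fun j => A i j)) ∧
  (∀ i < nr, Stage2Col nc (fun j => B i j)) ∧
  (∀ j < nc, Stage2Row nr (fun i => B i j)) ∧
  (∀ i < nr, ((range nc).filter fun j => A i j = 2).card = 2 →
    ∀ j < nc, A i j = 2 → ((range nr).filter fun r => A r j = 1).card = 1) ∧
  (∀ j < nc, ((range nr).filter fun i => B i j = 2).card = 2 →
    ∀ i < nr, B i j = 2 → ((range nc).filter fun c => B i c = 1).card = 1)

/-- Input assumptions of the dual column simulation: `(A, B)` is a stage 2 game
with at most `n` rows and columns, entries in `[0,2]`, every row and column with an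
entry `≥ 1`, whose rows with exactly two `2`s are exactly the rows `i < k`, with
row `i < k` having its two `2`s in columns `2i` and `2i+1`, and with column `2i`
(resp. `2i+1`) containing exactly one entry `1`. -/
def DcsInput (n nr nc k : ℕ) (A B : ℕ → ℕ → ℝ) : Prop :=
  nr ≤ n ∧ nc ≤ n ∧ k ≤ nr ∧ 2*k ≤ nc ∧
  Stage2Game nr nc A B ∧
  (∀ i < nr, ∀ j < nc, 0 ≤ A i j ∧ A i j ≤ 2) ∧
  (∀ i < nr, ∀ j < nc, 0 ≤ B i j ∧ B i j ≤ 2) ∧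
  (∀ i < nr, ∃ j < nc, 1 ≤ A i j) ∧ (∀ j < nc, ∃ i < nr, 1 ≤ A i j) ∧
  (∀ i < nr, ∃ j < nc, 1 ≤ B i j) ∧ (∀ j < nc, ∃ i < nr, 1 ≤ B i j) ∧
  (∀ i < k, A i (2*i) = 2 ∧ A i (2*i+1) = 2 ∧
    (∀ j < nc, A i j = 2 → j = 2*i ∨ j = 2*i+1)) ∧
  (∀ i, k ≤ i → i < nr → ((range nc).filter fun j => A i j = 2).card ≠ 2) ∧
  (∀ i < k, ((range nr).filter fun r => A r (2*i) = 1).card = 1 ∧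
            ((range nr).filter fun r => A r (2*i+1) = 1).card = 1)

/-- The row player's payoff matrix `A'` of the dual column simulation.  It has
`4k + nr` rows and `3k + nc` columns.  For `i < k` the blocks `(rb₁ⁱ, cb₁ⁱ)` and
`(rb₂ⁱ, cb₁ⁱ)` both equal `S = [[1,0,0],[0,1,1]]`, the blocks `(rb₁ⁱ, cb₂ⁱ)` and
`(rb₂ⁱ, cb₃ⁱ)` are all ones, and the block `(rb_e, cb₁ⁱ)` equals
`encode(A_{2i}, A_{2i+1})` (a `2` in row `i` of the first column, a `1` in the
second (resp. third) column in the unique row where column `2i` (resp. `2i+1`) of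
`A` equals `1`).  Columns `c ≥ 5k` restricted to `rb_e` equal columns
`A_{2k}, …, A_{nc-1}`; all other entries are `0`. -/
noncomputable def dcsA (k : ℕ) (A : ℕ → ℕ → ℝ) : ℕ → ℕ → ℝ := fun r c =>
  if r < 4*k then
    if c = 5*(r/4) then (if r % 2 = 0 then 1 else 0)
    else if c = 5*(r/4) + 1 ∨ c = 5*(r/4) + 2 then (if r % 2 = 1 then 1 else 0)
    else if c = 5*(r/4) + 3 then (if r % 4 < 2 then 1 else 0)
    else if c = 5*(r/4) + 4 then (if 2 ≤ r % 4 then 1 else 0)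
    else 0
  else
    if c < 5*k then
      (if c % 5 = 0 then (if r - 4*k = c/5 then 2 else 0)
       else if c % 5 = 1 then (if A (r - 4*k) (2*(c/5)) = 1 then 1 else 0)
       else if c % 5 = 2 then (if A (r - 4*k) (2*(c/5)+1) = 1 then 1 else 0)
       else 0)
    else A (r - 4*k) (c - 3*k)

/-- The column player's payoff matrix `B'` of the dual column simulation: for
`i < k` the block `(rb₁ⁱ, cb₁ⁱ)` equals `T₁ = [[0,1,0],[1,0,0]]`, the block
`(rb₂ⁱ, cb₁ⁱ)` equals `T₂ = [[0,0,1],[1,0,0]]`, the block `(rb_e, cb₂ⁱ)` equals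
column `B_{2i}` and the block `(rb_e, cb₃ⁱ)` equals column `B_{2i+1}`.  Columns
`c ≥ 5k` restricted to `rb_e` equal columns `B_{2k}, …, B_{nc-1}`; all other
entries are `0`. -/
noncomputable def dcsB (k : ℕ) (B : ℕ → ℕ → ℝ) : ℕ → ℕ → ℝ := fun r c =>
  if r < 4*k then
    if r % 4 = 0 then (if c = 5*(r/4) + 1 then 1 else 0)
    else if r % 4 = 2 then (if c = 5*(r/4) + 2 then 1 else 0)
    else (if c = 5*(r/4) then 1 else 0)
  else
    if c < 5*k then
      (if c % 5 = 3 then B (r - 4*k) (2*(c/5))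
       else if c % 5 = 4 then B (r - 4*k) (2*(c/5)+1)
       else 0)
    else B (r - 4*k) (c - 3*k)

/-- If `0 ≤ ε < 1/(5n)` and `(x*, y*)` is an `ε`-WSNE of `(A', B')`, then for every
row `i < k` of `A`: if `P(cb₁ⁱ) > 0` and `P(rb₁ⁱ) + P(rb₂ⁱ) > 0`, then
`y*_{5i+1} + y*_{5i+2} - ε ≤ y*_{5i} ≤ y*_{5i+1} + y*_{5i+2} + ε`. -/

private lemma sum_ind1 (N a : ℕ) (f : ℕ → ℝ) (ha : a < N) :
    ∑ j ∈ range N, (if j = a then (1:ℝ) else 0) * f j = f a := by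
  have h : ∀ j, (if j = a then (1:ℝ) else 0) * f j = if j = a then f a else 0 := by
    intro j; by_cases h1 : j = a
    · subst h1; simp
    · simp [h1]
  simp_rw [h]
  rw [Finset.sum_ite_eq' (range N) a, if_pos (mem_range.mpr ha)]

private lemma sum_ind2 (N a b : ℕ) (f : ℕ → ℝ) (hab : a ≠ b) (ha : a < N) (hb : b < N) :
    ∑ j ∈ range N, (if j = a ∨ j = b then (1:ℝ) else 0) * f j = f a + f b := by
  have h : ∀ j, (if j = a ∨ j = b then (1:ℝ) else 0) * f j
      = (if j = a then f a else 0) + (if j = b then f b else 0) := by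
    intro j
    by_cases h1 : j = a
    · subst h1; rw [if_pos (Or.inl rfl), if_pos rfl, if_neg hab]; ring
    · by_cases h2 : j = b
      · subst h2; rw [if_pos (Or.inr rfl), if_neg h1, if_pos rfl]; ring
      · rw [if_neg (by tauto), if_neg h1, if_neg h2]; ring
  simp_rw [h]
  rw [Finset.sum_add_distrib, Finset.sum_ite_eq' (range N) a, Finset.sum_ite_eq' (range N) b,
    if_pos (mem_range.mpr ha), if_pos (mem_range.mpr hb)]

private lemma sum_ind3 (N a b c : ℕ) (f : ℕ → ℝ) (hab : a ≠ b) (hac : a ≠ c) (hbc : b ≠ c)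
    (ha : a < N) (hb : b < N) (hc : c < N) :
    ∑ j ∈ range N, (if j = a ∨ j = b ∨ j = c then (1:ℝ) else 0) * f j = f a + f b + f c := by
  have h : ∀ j, (if j = a ∨ j = b ∨ j = c then (1:ℝ) else 0) * f j
      = ((if j = a then f a else 0) + (if j = b then f b else 0)) + (if j = c then f c else 0) := by
    intro j
    by_cases h1 : j = a
    · subst h1; rw [if_pos (Or.inl rfl), if_pos rfl, if_neg hab, if_neg hac]; ring
    · by_cases h2 : j = b
      · subst h2; rw [if_pos (Or.inr (Or.inl rfl)), if_neg h1, if_pos rfl, if_neg hbc]; ring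
      · by_cases h3 : j = c
        · subst h3; rw [if_pos (Or.inr (Or.inr rfl)), if_neg h1, if_neg h2, if_pos rfl]; ring
        · rw [if_neg (by tauto), if_neg h1, if_neg h2, if_neg h3]; ring
  simp_rw [h]
  rw [Finset.sum_add_distrib, Finset.sum_add_distrib, Finset.sum_ite_eq' (range N) a,
    Finset.sum_ite_eq' (range N) b, Finset.sum_ite_eq' (range N) c,
    if_pos (mem_range.mpr ha), if_pos (mem_range.mpr hb), if_pos (mem_range.mpr hc)]

private lemma dcsB_nonneg (k nr nc : ℕ) (B : ℕ → ℕ → ℝ) (h2k : 2*k ≤ nc)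
    (hBnn : ∀ i < nr, ∀ j < nc, 0 ≤ B i j) :
    ∀ r < 4*k+nr, ∀ c < 3*k+nc, 0 ≤ dcsB k B r c := by
  intro r hr c hc
  unfold dcsB
  split_ifs <;> first
    | exact hBnn _ (by omega) _ (by omega)
    | norm_num

private lemma dcsB_rowsum (k nr nc : ℕ) (B : ℕ → ℕ → ℝ) (h2k : 2*k ≤ nc)
    (hBnn : ∀ i < nr, ∀ j < nc, 0 ≤ B i j)
    (hBrow : ∀ i < nr, ∃ j < nc, 1 ≤ B i j) :
    ∀ r < 4*k+nr, 1 ≤ ∑ c ∈ range (3*k+nc), dcsB k B r c := by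
  intro r hr
  have hex : ∃ c0 < 3*k+nc, 1 ≤ dcsB k B r c0 := by
    by_cases hrk : r < 4*k
    · by_cases h0 : r % 4 = 0
      · refine ⟨5*(r/4)+1, by omega, ?_⟩
        unfold dcsB
        split_ifs <;> first | exact le_refl (1:ℝ) | (exfalso; omega)
      · by_cases h2 : r % 4 = 2
        · refine ⟨5*(r/4)+2, by omega, ?_⟩
          unfold dcsB
          split_ifs <;> first | exact le_refl (1:ℝ) | (exfalso; omega)
        · refine ⟨5*(r/4), by omega, ?_⟩
          unfold dcsB
          split_ifs <;> first | exact le_refl (1:ℝ) | (exfalso; omega)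
    · obtain ⟨j, hj, hj1⟩ := hBrow (r - 4*k) (by omega)
      by_cases hjk : j < 2*k
      · by_cases hje : j % 2 = 0
        · refine ⟨5*(j/2)+3, by omega, ?_⟩
          unfold dcsB
          rw [if_neg hrk, if_pos (by omega), if_pos (by omega)]
          have h' : 2*((5*(j/2)+3)/5) = j := by omega
          rw [h']; exact hj1
        · refine ⟨5*(j/2)+4, by omega, ?_⟩
          unfold dcsB
          rw [if_neg hrk, if_pos (by omega), if_neg (by omega), if_pos (by omega)]
          have h' : 2*((5*(j/2)+4)/5)+1 = j := by omega
          rw [h']; exact hj1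
      · refine ⟨3*k+j, by omega, ?_⟩
        unfold dcsB
        rw [if_neg hrk, if_neg (by omega)]
        have h' : 3*k+j-3*k = j := by omega
        rw [h']; exact hj1
  obtain ⟨c0, hc0, hc1⟩ := hex
  calc (1:ℝ) ≤ dcsB k B r c0 := hc1
    _ ≤ ∑ c ∈ range (3*k+nc), dcsB k B r c := by
        apply Finset.single_le_sum (fun c hc => dcsB_nonneg k nr nc B h2k hBnn r hr c (mem_range.mp hc))
          (mem_range.mpr hc0)

private lemma dcsB_col0 (k i : ℕ) (B : ℕ → ℕ → ℝ) (hik : i < k) :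
    ∀ r, dcsB k B r (5*i) = if r = 4*i+1 ∨ r = 4*i+3 then 1 else 0 := by
  intro r; unfold dcsB; split_ifs <;> first | rfl | (exfalso; omega)

private lemma dcsB_col1 (k i : ℕ) (B : ℕ → ℕ → ℝ) (hik : i < k) :
    ∀ r, dcsB k B r (5*i+1) = if r = 4*i then 1 else 0 := by
  intro r; unfold dcsB; split_ifs <;> first | rfl | (exfalso; omega)

private lemma dcsB_col2 (k i : ℕ) (B : ℕ → ℕ → ℝ) (hik : i < k) :
    ∀ r, dcsB k B r (5*i+2) = if r = 4*i+2 then 1 else 0 := by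
  intro r; unfold dcsB; split_ifs <;> first | rfl | (exfalso; omega)

private lemma dcsA_row0 (k i : ℕ) (A : ℕ → ℕ → ℝ) (hik : i < k) :
    ∀ j, dcsA k A (4*i) j = if j = 5*i ∨ j = 5*i+3 then 1 else 0 := by
  intro j; unfold dcsA; split_ifs <;> first | rfl | (exfalso; omega)

private lemma dcsA_row1 (k i : ℕ) (A : ℕ → ℕ → ℝ) (hik : i < k) :
    ∀ j, dcsA k A (4*i+1) j = if j = 5*i+1 ∨ j = 5*i+2 ∨ j = 5*i+3 then 1 else 0 := by
  intro j; unfold dcsA; split_ifs <;> first | rfl | (exfalso; omega)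

private lemma dcsA_row2 (k i : ℕ) (A : ℕ → ℕ → ℝ) (hik : i < k) :
    ∀ j, dcsA k A (4*i+2) j = if j = 5*i ∨ j = 5*i+4 then 1 else 0 := by
  intro j; unfold dcsA; split_ifs <;> first | rfl | (exfalso; omega)

private lemma dcsA_row3 (k i : ℕ) (A : ℕ → ℕ → ℝ) (hik : i < k) :
    ∀ j, dcsA k A (4*i+3) j = if j = 5*i+1 ∨ j = 5*i+2 ∨ j = 5*i+4 then 1 else 0 := by
  intro j; unfold dcsA; split_ifs <;> first | rfl | (exfalso; omega)


theorem stmt16 (n nr nc k : ℕ) (ε : ℝ) (A B : ℕ → ℕ → ℝ) (xstar ystar : ℕ → ℝ)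
    (hin : DcsInput n nr nc k A B)
    (hε0 : 0 ≤ ε) (hε : ε < 1 / (5 * (n:ℝ)))
    (hwsne : IsWSNE (4*k+nr) (3*k+nc) (dcsA k A) (dcsB k B) xstar ystar ε) :
    ∀ i < k,
      0 < ystar (5*i) + ystar (5*i+1) + ystar (5*i+2) →
      0 < xstar (4*i) + xstar (4*i+1) + xstar (4*i+2) + xstar (4*i+3) →
      ystar (5*i+1) + ystar (5*i+2) - ε ≤ ystar (5*i) ∧
      ystar (5*i) ≤ ystar (5*i+1) + ystar (5*i+2) + ε := by
  obtain ⟨hx0, hxz, hxs, hy0, hyz, hys, hrow, hcol⟩ := hwsne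
  obtain ⟨hnr, hnc, hknr, h2k, hstage, hA01, hB01, hArow, hAcol, hBrow, hBcol, hrest⟩ := hin
  have hn0 : 0 < (n:ℝ) := by
    rcases Nat.eq_zero_or_pos n with h | h
    · subst h
      simp only [Nat.cast_zero, mul_zero, div_zero] at hε
      linarith
    · exact_mod_cast h
  have hBnn : ∀ i < nr, ∀ j < nc, 0 ≤ B i j := fun i hi j hj => (hB01 i hi j hj).1
  have hrowsum := dcsB_rowsum k nr nc B h2k hBnn hBrow
  have hsumcol : 1 ≤ ∑ c ∈ range (3*k+nc), ∑ r ∈ range (4*k+nr), xstar r * dcsB k B r c := by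
    rw [Finset.sum_comm]
    calc (1:ℝ) = ∑ r ∈ range (4*k+nr), xstar r := hxs.symm
      _ ≤ ∑ r ∈ range (4*k+nr), xstar r * ∑ c ∈ range (3*k+nc), dcsB k B r c := by
          apply Finset.sum_le_sum
          intro r hr
          have h1 := hrowsum r (mem_range.mp hr)
          nlinarith [hx0 r]
      _ = ∑ r ∈ range (4*k+nr), ∑ c ∈ range (3*k+nc), xstar r * dcsB k B r c := by
          simp_rw [Finset.mul_sum]
  have key : ∀ j < 3*k+nc, 0 < ystar j →
      0 < ∑ r ∈ range (4*k+nr), xstar r * dcsB k B r j := by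
    intro j hj hyj
    by_contra hle
    push_neg at hle
    have hcolj := hcol j hj hyj
    have hub : ∀ c ∈ range (3*k+nc), ∑ r ∈ range (4*k+nr), xstar r * dcsB k B r c ≤ ε := by
      intro c hc
      have := hcolj c (mem_range.mp hc)
      linarith
    have h2 : ∑ c ∈ range (3*k+nc), ∑ r ∈ range (4*k+nr), xstar r * dcsB k B r c
        ≤ ((3*k+nc : ℕ) : ℝ) * ε := by
      calc ∑ c ∈ range (3*k+nc), ∑ r ∈ range (4*k+nr), xstar r * dcsB k B r c
          ≤ ∑ _c ∈ range (3*k+nc), ε := Finset.sum_le_sum hub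
        _ = ((3*k+nc : ℕ) : ℝ) * ε := by rw [Finset.sum_const, card_range, nsmul_eq_mul]
    have hcard : ((3*k+nc : ℕ) : ℝ) ≤ 4*(n:ℝ) := by
      have : 3*k+nc ≤ 4*n := by omega
      exact_mod_cast this
    have h3 : (1:ℝ) ≤ 4*(n:ℝ)*ε := by nlinarith
    have h4 : 4*(n:ℝ)*ε < 4*(n:ℝ)*(1/(5*(n:ℝ))) :=
      mul_lt_mul_of_pos_left hε (by positivity)
    have h5 : 4*(n:ℝ)*(1/(5*(n:ℝ))) = 4/5 := by
      field_simp
    linarith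
  intro i hik hy hx
  have hB0 := dcsB_col0 k i B hik
  have hB1 := dcsB_col1 k i B hik
  have hB2 := dcsB_col2 k i B hik
  have hc0 : ∑ r ∈ range (4*k+nr), xstar r * dcsB k B r (5*i)
      = xstar (4*i+1) + xstar (4*i+3) := by
    rw [Finset.sum_congr rfl (fun r _ => by rw [hB0 r]; ring :
        ∀ r ∈ range (4*k+nr), xstar r * dcsB k B r (5*i)
          = (if r = 4*i+1 ∨ r = 4*i+3 then (1:ℝ) else 0) * xstar r),
      sum_ind2 _ _ _ _ (by omega) (by omega) (by omega)]
  have hc1 : ∑ r ∈ range (4*k+nr), xstar r * dcsB k B r (5*i+1) = xstar (4*i) := by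
    rw [Finset.sum_congr rfl (fun r _ => by rw [hB1 r]; ring :
        ∀ r ∈ range (4*k+nr), xstar r * dcsB k B r (5*i+1)
          = (if r = 4*i then (1:ℝ) else 0) * xstar r),
      sum_ind1 _ _ _ (by omega)]
  have hc2 : ∑ r ∈ range (4*k+nr), xstar r * dcsB k B r (5*i+2) = xstar (4*i+2) := by
    rw [Finset.sum_congr rfl (fun r _ => by rw [hB2 r]; ring :
        ∀ r ∈ range (4*k+nr), xstar r * dcsB k B r (5*i+2)
          = (if r = 4*i+2 then (1:ℝ) else 0) * xstar r),
      sum_ind1 _ _ _ (by omega)]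
  have hA0 := dcsA_row0 k i A hik
  have hA1 := dcsA_row1 k i A hik
  have hA2 := dcsA_row2 k i A hik
  have hA3 := dcsA_row3 k i A hik
  have hr0 : ∑ j ∈ range (3*k+nc), dcsA k A (4*i) j * ystar j
      = ystar (5*i) + ystar (5*i+3) := by
    rw [Finset.sum_congr rfl (fun j _ => by rw [hA0 j]),
      sum_ind2 _ _ _ _ (by omega) (by omega) (by omega)]
  have hr1 : ∑ j ∈ range (3*k+nc), dcsA k A (4*i+1) j * ystar j
      = ystar (5*i+1) + ystar (5*i+2) + ystar (5*i+3) := by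
    rw [Finset.sum_congr rfl (fun j _ => by rw [hA1 j]),
      sum_ind3 _ _ _ _ _ (by omega) (by omega) (by omega) (by omega) (by omega) (by omega)]
  have hr2 : ∑ j ∈ range (3*k+nc), dcsA k A (4*i+2) j * ystar j
      = ystar (5*i) + ystar (5*i+4) := by
    rw [Finset.sum_congr rfl (fun j _ => by rw [hA2 j]),
      sum_ind2 _ _ _ _ (by omega) (by omega) (by omega)]
  have hr3 : ∑ j ∈ range (3*k+nc), dcsA k A (4*i+3) j * ystar j
      = ystar (5*i+1) + ystar (5*i+2) + ystar (5*i+4) := by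
    rw [Finset.sum_congr rfl (fun j _ => by rw [hA3 j]),
      sum_ind3 _ _ _ _ _ (by omega) (by omega) (by omega) (by omega) (by omega) (by omega)]
  have upper : ystar (5*i) ≤ ystar (5*i+1) + ystar (5*i+2) + ε := by
    rcases lt_or_ge 0 (ystar (5*i)) with hpos | hnp
    · have hk0 := key (5*i) (by omega) hpos
      rw [hc0] at hk0
      rcases lt_or_ge 0 (xstar (4*i+1)) with h1 | h1
      · have h := hrow (4*i+1) (by omega) h1 (4*i) (by omega)
        rw [hr1, hr0] at h
        linarith
      · have h3 : 0 < xstar (4*i+3) := by linarith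
        have h := hrow (4*i+3) (by omega) h3 (4*i+2) (by omega)
        rw [hr3, hr2] at h
        linarith
    · have := hy0 (5*i+1)
      have := hy0 (5*i+2)
      linarith
  have lower : ystar (5*i+1) + ystar (5*i+2) - ε ≤ ystar (5*i) := by
    rcases lt_or_ge 0 (ystar (5*i+1)) with h1 | h1
    · have hk1 := key (5*i+1) (by omega) h1
      rw [hc1] at hk1
      have h := hrow (4*i) (by omega) hk1 (4*i+1) (by omega)
      rw [hr0, hr1] at h
      linarith
    · rcases lt_or_ge 0 (ystar (5*i+2)) with h2 | h2
      · have hk2 := key (5*i+2) (by omega) h2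
        rw [hc2] at hk2
        have h := hrow (4*i+2) (by omega) hk2 (4*i+3) (by omega)
        rw [hr2, hr3] at h
        linarith
      · have := hy0 (5*i)
        linarith
  exact ⟨lower, upper⟩
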